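/- arXiv:2201.11962 — 6 statements merged into one kernel-verified Lean document; each statement's English description precedes it below -/
import Mathlib

section
/- For every integrable real random variable C on a probability space, the map q ↦ scvar_q[C] is concave on the interval [0,1] and continuous on [0,1]. -/
open MeasureTheory

/-- Scaled conditional value-at-risk: supremum of `E[C·Q]` over measurable `Q` with
`0 ≤ Q ≤ 1` a.s. and `E[Q] = q`. -/
noncomputable def scvar {Ω : Type*} [MeasurableSpace Ω] (P : Measure Ω) (C : Ω → ℝ) (q : ℝ) : ℝ :=
  sSup {y : ℝ | ∃ Q : Ω → ℝ, Measurable Q ∧ (∀ᵐ ω ∂P, 0 ≤ Q ω ∧ Q ω ≤ 1) ∧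
    (∫ ω, Q ω ∂P) = q ∧ y = ∫ ω, C ω * Q ω ∂P}

namespace ScvarAux
set_option linter.unusedSectionVars false

variable {Ω : Type*} [MeasurableSpace Ω]

def sset (P : Measure Ω) (C : Ω → ℝ) (q : ℝ) : Set ℝ :=
  {y : ℝ | ∃ Q : Ω → ℝ, Measurable Q ∧ (∀ᵐ ω ∂P, 0 ≤ Q ω ∧ Q ω ≤ 1) ∧
    (∫ ω, Q ω ∂P) = q ∧ y = ∫ ω, C ω * Q ω ∂P}

lemma scvar_eq (P : Measure Ω) (C : Ω → ℝ) (q : ℝ) : scvar P C q = sSup (sset P C q) := rfl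

variable {P : Measure Ω} [IsProbabilityMeasure P] {C Q : Ω → ℝ} {q M : ℝ}

lemma int_Q (hQm : Measurable Q) (hQb : ∀ᵐ ω ∂P, 0 ≤ Q ω ∧ Q ω ≤ 1) :
    Integrable Q P :=
  (integrable_const (1:ℝ)).mono' hQm.aestronglyMeasurable
    (hQb.mono fun ω h => by rw [Real.norm_eq_abs, abs_of_nonneg h.1]; exact h.2)

lemma int_CQ (hC : Integrable C P) (hQm : Measurable Q)
    (hQb : ∀ᵐ ω ∂P, 0 ≤ Q ω ∧ Q ω ≤ 1) :
    Integrable (fun ω => C ω * Q ω) P := by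
  refine hC.abs.mono' (hC.1.mul hQm.aestronglyMeasurable) (hQb.mono fun ω h => ?_)
  rw [Real.norm_eq_abs, abs_mul]
  have hQ1 : |Q ω| ≤ 1 := abs_le.mpr ⟨by linarith [h.1], h.2⟩
  exact mul_le_of_le_one_right (abs_nonneg _) hQ1

lemma sset_bdd (hC : Integrable C P) (q : ℝ) : BddAbove (sset P C q) := by
  refine ⟨∫ ω, |C ω| ∂P, fun y hy => ?_⟩
  obtain ⟨Q, hQm, hQb, hQq, rfl⟩ := hy
  refine integral_mono_ae (int_CQ hC hQm hQb) hC.abs (hQb.mono fun ω h => ?_)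
  have hQ1 : |Q ω| ≤ 1 := abs_le.mpr ⟨by linarith [h.1], h.2⟩
  calc C ω * Q ω ≤ |C ω * Q ω| := le_abs_self _
    _ = |C ω| * |Q ω| := abs_mul _ _
    _ ≤ |C ω| * 1 := by gcongr
    _ = |C ω| := mul_one _

lemma const_mem (hq : q ∈ Set.Icc (0:ℝ) 1) : (∫ ω, C ω * q ∂P) ∈ sset P C q :=
  ⟨fun _ => q, measurable_const, Filter.Eventually.of_forall fun _ => ⟨hq.1, hq.2⟩, by simp, rfl⟩

lemma sset_nonempty (hq : q ∈ Set.Icc (0:ℝ) 1) : (sset P C q).Nonempty :=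
  ⟨_, const_mem hq⟩

lemma int_trunc (hC : Integrable C P) (M : ℝ) :
    Integrable (fun ω => max (|C ω| - M) 0) P :=
  (hC.abs.sub (integrable_const M)).pos_part

lemma key_bound (hC : Integrable C P) (hQm : Measurable Q)
    (hQb : ∀ᵐ ω ∂P, 0 ≤ Q ω ∧ Q ω ≤ 1) (hM : 0 ≤ M) :
    (∫ ω, C ω * Q ω ∂P) ≤ (∫ ω, max (|C ω| - M) 0 ∂P) + M * (∫ ω, Q ω ∂P) := by
  have hint := int_trunc hC M
  have hQ := int_Q hQm hQb
  calc (∫ ω, C ω * Q ω ∂P) ≤ ∫ ω, (max (|C ω| - M) 0 + M * Q ω) ∂P := by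
        refine integral_mono_ae (int_CQ hC hQm hQb) (hint.add (hQ.const_mul M))
          (hQb.mono fun ω h => ?_)
        have h1 : C ω * Q ω ≤ |C ω| * Q ω :=
          mul_le_mul_of_nonneg_right (le_abs_self _) h.1
        have h2 : (|C ω| - M) * Q ω ≤ max (|C ω| - M) 0 := by
          rcases le_or_gt 0 (|C ω| - M) with h' | h'
          · have := mul_le_mul_of_nonneg_left h.2 h'
            have h3 := le_max_left (|C ω| - M) 0
            nlinarith
          · have := mul_nonpos_of_nonpos_of_nonneg h'.le h.1
            have h3 := le_max_right (|C ω| - M) 0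
            linarith
        have h3 : |C ω| * Q ω = (|C ω| - M) * Q ω + M * Q ω := by ring
        show C ω * Q ω ≤ max (|C ω| - M) 0 + M * Q ω
        linarith
    _ = _ := by rw [integral_add hint (hQ.const_mul M), integral_const_mul]

lemma trunc_small (hC : Integrable C P) {ε : ℝ} (hε : 0 < ε) :
    ∃ M : ℝ, 0 ≤ M ∧ (∫ ω, max (|C ω| - M) 0 ∂P) < ε := by
  have h : Filter.Tendsto (fun n : ℕ => ∫ ω, max (|C ω| - n) 0 ∂P)
      Filter.atTop (nhds 0) := by
    have h' := tendsto_integral_of_dominated_convergence (μ := P)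
      (F := fun (n : ℕ) ω => max (|C ω| - n) 0) (f := fun _ => (0:ℝ)) (fun ω => |C ω|)
      (fun n => (int_trunc hC n).1) hC.abs ?_ ?_
    · simpa using h'
    · refine fun n => Filter.Eventually.of_forall fun ω => ?_
      rw [Real.norm_eq_abs, abs_of_nonneg (le_max_right _ _)]
      exact max_le (by simp [Nat.cast_nonneg]) (abs_nonneg _)
    · refine Filter.Eventually.of_forall fun ω => ?_
      obtain ⟨N, hN⟩ := exists_nat_ge (|C ω|)
      refine Filter.Tendsto.congr' ?_ tendsto_const_nhds
      filter_upwards [Filter.eventually_ge_atTop N] with n hn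
      have : (N:ℝ) ≤ n := Nat.cast_le.mpr hn
      exact (max_eq_right (by linarith)).symm
  have := (h.eventually_lt_const hε).exists
  obtain ⟨n, hn⟩ := this
  exact ⟨n, Nat.cast_nonneg n, hn⟩


lemma le_scvar (hC : Integrable C P) (hq : q ∈ Set.Icc (0:ℝ) 1) :
    (∫ ω, C ω ∂P) * q ≤ scvar P C q := by
  rw [scvar_eq]
  have h := le_csSup (sset_bdd hC q) (const_mem (P := P) (C := C) hq)
  rwa [integral_mul_const] at h

lemma scvar_le_trunc (hC : Integrable C P) (hq : q ∈ Set.Icc (0:ℝ) 1) (hM : 0 ≤ M) :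
    scvar P C q ≤ (∫ ω, max (|C ω| - M) 0 ∂P) + M * q := by
  rw [scvar_eq]
  refine csSup_le (sset_nonempty hq) ?_
  rintro y ⟨Q, hQm, hQb, hQq, rfl⟩
  have := key_bound hC hQm hQb hM
  rwa [hQq] at this

lemma scvar_le_trunc' (hC : Integrable C P) (hq : q ∈ Set.Icc (0:ℝ) 1) (hM : 0 ≤ M) :
    scvar P C q ≤ (∫ ω, C ω ∂P) + (∫ ω, max (|C ω| - M) 0 ∂P) + M * (1 - q) := by
  rw [scvar_eq]
  refine csSup_le (sset_nonempty hq) ?_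
  rintro y ⟨Q, hQm, hQb, hQq, rfl⟩
  have hQ := int_Q hQm hQb
  have hQ'm : Measurable (fun ω => 1 - Q ω) := measurable_const.sub hQm
  have hQ'b : ∀ᵐ ω ∂P, 0 ≤ 1 - Q ω ∧ 1 - Q ω ≤ 1 :=
    hQb.mono fun ω h => ⟨by linarith [h.2], by linarith [h.1]⟩
  have key := key_bound (C := fun ω => -C ω) hC.neg hQ'm hQ'b hM
  have e1 : (∫ ω, (fun ω => -C ω) ω * (1 - Q ω) ∂P) = (∫ ω, C ω * Q ω ∂P) - ∫ ω, C ω ∂P := by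
    have : (fun ω => (fun ω => -C ω) ω * (1 - Q ω)) = fun ω => C ω * Q ω - C ω := by
      funext ω; ring
    rw [this, integral_sub (int_CQ hC hQm hQb) hC]
  have e2 : (∫ ω, max (|(fun ω => -C ω) ω| - M) 0 ∂P) = ∫ ω, max (|C ω| - M) 0 ∂P := by
    simp [abs_neg]
  have e3 : (∫ ω, (1 - Q ω) ∂P) = 1 - q := by
    rw [integral_sub (integrable_const 1) hQ, hQq]
    simp
  rw [e1, e2, e3] at key
  linarith

lemma scvar_zero (hC : Integrable C P) : scvar P C 0 = 0 := by
  rw [scvar_eq]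
  have h0 : (0:ℝ) ∈ sset P C 0 :=
    ⟨fun _ => 0, measurable_const, Filter.Eventually.of_forall fun _ => ⟨le_rfl, zero_le_one⟩,
      by simp, by simp⟩
  refine le_antisymm (csSup_le ⟨_, h0⟩ ?_) (le_csSup (sset_bdd hC 0) h0)
  rintro y ⟨Q, hQm, hQb, hQq, rfl⟩
  have hQ0 : Q =ᵐ[P] 0 :=
    (integral_eq_zero_iff_of_nonneg_ae (hQb.mono fun ω h => h.1) (int_Q hQm hQb)).1 hQq
  have : (fun ω => C ω * Q ω) =ᵐ[P] (fun _ => 0) := hQ0.mono fun ω h => by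
    simp only [Pi.zero_apply] at h; simp [h]
  rw [integral_congr_ae this]
  simp

lemma scvar_one (hC : Integrable C P) : scvar P C 1 = ∫ ω, C ω ∂P := by
  rw [scvar_eq]
  have h1 : (∫ ω, C ω ∂P) ∈ sset P C 1 :=
    ⟨fun _ => 1, measurable_const, Filter.Eventually.of_forall fun _ => ⟨zero_le_one, le_rfl⟩,
      by simp, by simp⟩
  refine le_antisymm (csSup_le ⟨_, h1⟩ ?_) (le_csSup (sset_bdd hC 1) h1)
  rintro y ⟨Q, hQm, hQb, hQq, rfl⟩
  have hQ := int_Q hQm hQb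
  have hint : Integrable (fun ω => 1 - Q ω) P := (integrable_const 1).sub hQ
  have hz : (∫ ω, (1 - Q ω) ∂P) = 0 := by
    rw [integral_sub (integrable_const 1) hQ, hQq]; simp
  have hQ1 : (fun ω => 1 - Q ω) =ᵐ[P] 0 :=
    (integral_eq_zero_iff_of_nonneg_ae (hQb.mono fun ω h => by simp only [Pi.zero_apply]; linarith [h.2]) hint).1 hz
  have : (fun ω => C ω * Q ω) =ᵐ[P] C := hQ1.mono fun ω h => by
    simp only [Pi.zero_apply] at h
    have : Q ω = 1 := by linarith
    simp [this]
  exact (integral_congr_ae this).le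


lemma scvar_concave (hC : Integrable C P) :
    ConcaveOn ℝ (Set.Icc (0:ℝ) 1) (fun q => scvar P C q) := by
  refine ⟨convex_Icc 0 1, fun x hx y hy a b ha hb hab => ?_⟩
  simp only [smul_eq_mul, scvar_eq]
  have hxy : a * x + b * y ∈ Set.Icc (0:ℝ) 1 := (convex_Icc (0:ℝ) 1) hx hy ha hb hab
  rw [Real.le_sSup_iff (sset_bdd hC _) (sset_nonempty hxy)]
  intro ε hε
  obtain ⟨y1, hy1m, hy1⟩ := Real.add_neg_lt_sSup (sset_nonempty (P := P) (C := C) hx) hε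
  obtain ⟨y2, hy2m, hy2⟩ := Real.add_neg_lt_sSup (sset_nonempty (P := P) (C := C) hy) hε
  obtain ⟨Q1, hQ1m, hQ1b, hQ1q, rfl⟩ := hy1m
  obtain ⟨Q2, hQ2m, hQ2b, hQ2q, rfl⟩ := hy2m
  refine ⟨a * (∫ ω, C ω * Q1 ω ∂P) + b * (∫ ω, C ω * Q2 ω ∂P),
    ⟨fun ω => a * Q1 ω + b * Q2 ω, (hQ1m.const_mul a).add (hQ2m.const_mul b), ?_, ?_, ?_⟩, ?_⟩
  · filter_upwards [hQ1b, hQ2b] with ω h1 h2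
    constructor
    · have := mul_nonneg ha h1.1; have := mul_nonneg hb h2.1; linarith
    · have := mul_le_mul_of_nonneg_left h1.2 ha
      have := mul_le_mul_of_nonneg_left h2.2 hb
      linarith
  · rw [integral_add ((int_Q hQ1m hQ1b).const_mul a) ((int_Q hQ2m hQ2b).const_mul b),
      integral_const_mul, integral_const_mul, hQ1q, hQ2q]
  · have e : (fun ω => C ω * (a * Q1 ω + b * Q2 ω))
        = fun ω => a * (C ω * Q1 ω) + b * (C ω * Q2 ω) := by funext ω; ring
    rw [e, integral_add ((int_CQ hC hQ1m hQ1b).const_mul a) ((int_CQ hC hQ2m hQ2b).const_mul b),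
      integral_const_mul, integral_const_mul]
  · rcases ha.eq_or_lt with h | h
    · have hb1 : b = 1 := by linarith
      subst hb1
      rw [← h]
      linarith
    · have k1 := mul_lt_mul_of_pos_left hy1 h
      have k2 := mul_le_mul_of_nonneg_left hy2.le hb
      have k3 : a * ε + b * ε = ε := by rw [← add_mul, hab, one_mul]
      linarith

lemma scvar_cwa_zero (hC : Integrable C P) :
    ContinuousWithinAt (fun q => scvar P C q) (Set.Icc (0:ℝ) 1) 0 := by
  rw [Metric.continuousWithinAt_iff]
  simp only [scvar_zero hC]
  intro ε hε
  obtain ⟨M, hM0, hMε⟩ := trunc_small hC (half_pos hε)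
  set A := |∫ ω, C ω ∂P| with hA
  have hApos : 0 ≤ A := abs_nonneg _
  have hD : (0:ℝ) < M + A + 1 := by positivity
  refine ⟨(ε/2)/(M+A+1), by positivity, fun x hx hdist => ?_⟩
  rw [Real.dist_eq, sub_zero] at hdist ⊢
  rw [abs_of_nonneg hx.1] at hdist
  have hup := scvar_le_trunc hC hx hM0
  have hlow := le_scvar hC hx
  have hMx : M * x ≤ ε/2 := by
    have k1 : M * x ≤ M * ((ε/2)/(M+A+1)) := mul_le_mul_of_nonneg_left hdist.le hM0
    have k2 : M * ((ε/2)/(M+A+1)) ≤ ε/2 := by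
      rw [mul_div_assoc', div_le_iff₀ hD]
      nlinarith
    linarith
  have hAx : A * x ≤ ε/2 := by
    have k1 : A * x ≤ A * ((ε/2)/(M+A+1)) := mul_le_mul_of_nonneg_left hdist.le hApos
    have k2 : A * ((ε/2)/(M+A+1)) ≤ ε/2 := by
      rw [mul_div_assoc', div_le_iff₀ hD]
      nlinarith
    linarith
  rw [abs_lt]
  constructor
  · have := mul_le_mul_of_nonneg_right (neg_abs_le (∫ ω, C ω ∂P)) hx.1
    have hεA : -(A * x) ≤ (∫ ω, C ω ∂P) * x := by nlinarith
    nlinarith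
  · nlinarith

lemma scvar_cwa_one (hC : Integrable C P) :
    ContinuousWithinAt (fun q => scvar P C q) (Set.Icc (0:ℝ) 1) 1 := by
  rw [Metric.continuousWithinAt_iff]
  simp only [scvar_one hC]
  intro ε hε
  obtain ⟨M, hM0, hMε⟩ := trunc_small hC (half_pos hε)
  set A := |∫ ω, C ω ∂P| with hA
  have hApos : 0 ≤ A := abs_nonneg _
  have hD : (0:ℝ) < M + A + 1 := by positivity
  refine ⟨(ε/2)/(M+A+1), by positivity, fun x hx hdist => ?_⟩
  rw [Real.dist_eq] at hdist ⊢
  have hx1 : |x - 1| = 1 - x := by rw [abs_of_nonpos (by linarith [hx.2])]; ring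
  rw [hx1] at hdist
  have hup := scvar_le_trunc' hC hx hM0
  have hlow := le_scvar hC hx
  have hMx : M * (1 - x) ≤ ε/2 := by
    have k1 : M * (1-x) ≤ M * ((ε/2)/(M+A+1)) := mul_le_mul_of_nonneg_left hdist.le hM0
    have k2 : M * ((ε/2)/(M+A+1)) ≤ ε/2 := by
      rw [mul_div_assoc', div_le_iff₀ hD]
      nlinarith
    linarith
  have hAx : A * (1 - x) ≤ ε/2 := by
    have k1 : A * (1-x) ≤ A * ((ε/2)/(M+A+1)) := mul_le_mul_of_nonneg_left hdist.le hApos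
    have k2 : A * ((ε/2)/(M+A+1)) ≤ ε/2 := by
      rw [mul_div_assoc', div_le_iff₀ hD]
      nlinarith
    linarith
  rw [abs_lt]
  constructor
  · -- -ε < scvar x - ∫C : scvar x ≥ (∫C) x = ∫C - (1-x)∫C ≥ ∫C - (1-x)A
    have h1 : (∫ ω, C ω ∂P) * x = (∫ ω, C ω ∂P) - (1 - x) * (∫ ω, C ω ∂P) := by ring
    have h2 : (1 - x) * (∫ ω, C ω ∂P) ≤ (1 - x) * A := by
      have hx' : 0 ≤ 1 - x := by linarith [hx.2]
      exact mul_le_mul_of_nonneg_left (le_abs_self _) hx'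
    nlinarith
  · nlinarith

end ScvarAux

/-- The map `q ↦ scvar_q[C]` is concave and continuous on `[0,1]`. -/
theorem scvar_concaveOn_continuousOn {Ω : Type*} [MeasurableSpace Ω] (P : Measure Ω)
    [IsProbabilityMeasure P] (C : Ω → ℝ) (hC : Integrable C P) :
    ConcaveOn ℝ (Set.Icc (0 : ℝ) 1) (fun q => scvar P C q) ∧
    ContinuousOn (fun q => scvar P C q) (Set.Icc (0 : ℝ) 1) := by
  have hconc := ScvarAux.scvar_concave hC
  refine ⟨hconc, fun q hq => ?_⟩
  rcases eq_or_lt_of_le hq.1 with h0 | h0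
  · rw [← h0]
    exact ScvarAux.scvar_cwa_zero hC
  rcases eq_or_lt_of_le hq.2 with h1 | h1
  · rw [h1]
    exact ScvarAux.scvar_cwa_one hC
  · have hcont := hconc.continuousOn_interior
    rw [interior_Icc] at hcont
    exact ((hcont q ⟨h0, h1⟩).continuousAt (Ioo_mem_nhds h0 h1)).continuousWithinAt
end

section
/- Let C be an integrable real random variable on a probability space whose law has no atoms, let q ∈ (0,1), and let c ∈ ℝ satisfy P(C ≥ c) = q. Then scvar_q[C] = E[C · 1{C ≥ c}], i.e., the scaled conditional value-at-risk equals the truncated average of C beyond its (1−q)-quantile. -/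
open MeasureTheory

theorem scvar_aux {Ω : Type*} [MeasurableSpace Ω] (P : Measure Ω)
    [IsProbabilityMeasure P] (C : Ω → ℝ) (hC : Integrable C P) (hCm : Measurable C)
    {q : ℝ} (hq : q ∈ Set.Ioo (0 : ℝ) 1) {c : ℝ}
    (hc : P {ω | c ≤ C ω} = ENNReal.ofReal q)
    (Q : Ω → ℝ) (hQm : Measurable Q) (hQb : ∀ᵐ ω ∂P, 0 ≤ Q ω ∧ Q ω ≤ 1)
    (hQq : (∫ ω, Q ω ∂P) = q) :
    ∫ ω, C ω * Q ω ∂P ≤ ∫ ω, C ω * Set.indicator {ω | c ≤ C ω} (fun _ => (1 : ℝ)) ω ∂P := by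
  set A := {ω | c ≤ C ω} with hA_def
  have hA : MeasurableSet A := measurableSet_le measurable_const hCm
  have hPA : (P A).toReal = q := by rw [hc, ENNReal.toReal_ofReal hq.1.le]
  set I : Ω → ℝ := A.indicator (fun _ => (1:ℝ)) with hI_def
  have hIval : ∀ ω, I ω = 0 ∨ I ω = 1 := by
    intro ω; by_cases h : ω ∈ A <;> simp [hI_def, h]
  have hIm : Measurable I := measurable_const.indicator hA
  have hCI : (fun ω => C ω * I ω) = A.indicator C := by
    funext ω; by_cases h : ω ∈ A <;> simp [hI_def, h]
  have hCIint : Integrable (fun ω => C ω * I ω) P := by rw [hCI]; exact hC.indicator hA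
  have hCQint : Integrable (fun ω => C ω * Q ω) P := by
    refine Integrable.mono' hC.abs (hCm.mul hQm).aestronglyMeasurable ?_
    filter_upwards [hQb] with ω ⟨h0, h1⟩
    rw [norm_mul]
    calc ‖C ω‖ * ‖Q ω‖ ≤ ‖C ω‖ * 1 := by
          apply mul_le_mul_of_nonneg_left _ (norm_nonneg _)
          rw [Real.norm_eq_abs, abs_of_nonneg h0]; exact h1
      _ = |C ω| := by rw [mul_one, Real.norm_eq_abs]
  have hQint : Integrable Q P := by
    refine Integrable.mono' (integrable_const 1) hQm.aestronglyMeasurable ?_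
    filter_upwards [hQb] with ω ⟨h0, h1⟩
    rw [Real.norm_eq_abs, abs_of_nonneg h0]; exact h1
  have hIint : Integrable I P := by
    exact (integrable_const (1:ℝ)).indicator hA
  -- f := (C - c)(I - Q) ≥ 0 a.e., integrable
  set f : Ω → ℝ := fun ω => (C ω - c) * (I ω - Q ω) with hf_def
  have hfint : Integrable f P := by
    have : f = (fun ω => C ω * I ω - C ω * Q ω - c * I ω + c * Q ω) := by
      funext ω; ring
    rw [this]
    exact ((hCIint.sub hCQint).sub (hIint.const_mul c)).add (hQint.const_mul c)
  have hfnn : 0 ≤ ∫ ω, f ω ∂P := by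
    refine integral_nonneg_of_ae ?_
    filter_upwards [hQb] with ω ⟨h0, h1⟩
    by_cases h : ω ∈ A
    · have hI1 : I ω = 1 := by simp [hI_def, h]
      have : (0:ℝ) ≤ C ω - c := sub_nonneg.mpr h
      exact mul_nonneg this (by rw [hI1]; linarith)
    · have hI0 : I ω = 0 := by simp [hI_def, h]
      have hlt : C ω - c < 0 := by
        simp only [hA_def, Set.mem_setOf_eq, not_le] at h; linarith
      have h2 : I ω - Q ω ≤ 0 := by rw [hI0]; linarith
      show (0:ℝ) ≤ (C ω - c) * (I ω - Q ω)
      nlinarith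
  have hIq : ∫ ω, I ω ∂P = q := by
    rw [hI_def, integral_indicator_const (1:ℝ) hA, smul_eq_mul, mul_one]; exact hPA
  have hsplit : ∫ ω, f ω ∂P
      = (∫ ω, C ω * I ω ∂P) - (∫ ω, C ω * Q ω ∂P) - c * q + c * q := by
    have hstep : f = (fun ω => (C ω * I ω - C ω * Q ω - c * I ω) + c * Q ω) := by
      funext ω; ring
    have h1 : Integrable (fun ω => C ω * I ω - C ω * Q ω) P := hCIint.sub hCQint
    have h2 : Integrable (fun ω => C ω * I ω - C ω * Q ω - c * I ω) P :=
      h1.sub (hIint.const_mul c)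
    rw [hstep, integral_add h2 (hQint.const_mul c), integral_sub h1 (hIint.const_mul c),
      integral_sub hCIint hCQint, integral_const_mul, integral_const_mul, hIq, hQq]
  have := hfnn
  rw [hsplit] at this
  linarith


/-- If the law of `C` has no atoms, `q ∈ (0,1)` and `c` is such that `P(C ≥ c) = q`, then
`scvar_q[C] = E[C · 1{C ≥ c}]`, the truncated average of `C` beyond its `(1-q)`-quantile. -/
theorem scvar_eq_truncated_average {Ω : Type*} [MeasurableSpace Ω] (P : Measure Ω)
    [IsProbabilityMeasure P] (C : Ω → ℝ) (hC : Integrable C P) (hCm : Measurable C)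
    (hatomless : ∀ c : ℝ, P {ω | C ω = c} = 0)
    {q : ℝ} (hq : q ∈ Set.Ioo (0 : ℝ) 1) {c : ℝ}
    (hc : P {ω | c ≤ C ω} = ENNReal.ofReal q) :
    scvar P C q = ∫ ω, C ω * Set.indicator {ω | c ≤ C ω} (fun _ => (1 : ℝ)) ω ∂P := by
  set A := {ω | c ≤ C ω} with hA_def
  have hA : MeasurableSet A := measurableSet_le measurable_const hCm
  have hPA : (P A).toReal = q := by rw [hc, ENNReal.toReal_ofReal hq.1.le]
  set y₀ := ∫ ω, C ω * Set.indicator A (fun _ => (1 : ℝ)) ω ∂P with hy₀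
  set S := {y : ℝ | ∃ Q : Ω → ℝ, Measurable Q ∧ (∀ᵐ ω ∂P, 0 ≤ Q ω ∧ Q ω ≤ 1) ∧
    (∫ ω, Q ω ∂P) = q ∧ y = ∫ ω, C ω * Q ω ∂P} with hS
  have hmem : y₀ ∈ S := by
    refine ⟨A.indicator (fun _ => (1:ℝ)), measurable_const.indicator hA, ?_, ?_, rfl⟩
    · filter_upwards with ω
      by_cases h : ω ∈ A <;> simp [h]
    · rw [integral_indicator_const (1:ℝ) hA, smul_eq_mul, mul_one]; exact hPA
  have hub : ∀ y ∈ S, y ≤ y₀ := by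
    rintro y ⟨Q, hQm, hQb, hQq, rfl⟩
    exact scvar_aux P C hC hCm hq hc Q hQm hQb hQq
  exact le_antisymm (csSup_le ⟨y₀, hmem⟩ hub) (le_csSup ⟨y₀, hub⟩ hmem)
end

section
/- For every integrable real random variable C on a probability space and every q ∈ [0,1], the supremum defining scvar_q[C] is attained: there exists a measurable Q : Ω → ℝ with 0 ≤ Q ≤ 1 almost surely and E[Q] = q such that E[C·Q] = scvar_q[C] (equivalently, E[C·Q'] ≤ E[C·Q] for every measurable Q' with 0 ≤ Q' ≤ 1 a.s. and E[Q'] = q). -/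
open MeasureTheory

section Helpers

variable {Ω : Type*} [MeasurableSpace Ω] {P : Measure Ω} [IsProbabilityMeasure P]

lemma my_int_bdd {Q : Ω → ℝ} (hm : AEStronglyMeasurable Q P)
    (hb : ∀ᵐ ω ∂P, 0 ≤ Q ω ∧ Q ω ≤ 1) : Integrable Q P := by
  refine Integrable.mono (integrable_const (1:ℝ)) hm ?_
  filter_upwards [hb] with ω h
  simp only [Real.norm_eq_abs, norm_one, abs_le]
  exact ⟨by linarith [h.1], h.2⟩

omit [IsProbabilityMeasure P] in
lemma my_int_mul {C Q : Ω → ℝ} (hC : Integrable C P) (hm : AEStronglyMeasurable Q P)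
    (hb : ∀ᵐ ω ∂P, 0 ≤ Q ω ∧ Q ω ≤ 1) : Integrable (fun ω => C ω * Q ω) P := by
  refine Integrable.mono hC (hC.1.mul hm) ?_
  filter_upwards [hb] with ω h
  simp only [Real.norm_eq_abs, abs_mul]
  calc |C ω| * |Q ω| ≤ |C ω| * 1 :=
        mul_le_mul_of_nonneg_left (abs_le.2 ⟨by linarith [h.1], h.2⟩) (abs_nonneg _)
    _ = |C ω| := mul_one _

/-- Key comparison: a threshold solution dominates any admissible `Q'`. -/
lemma my_key_le {C : Ω → ℝ} (hC : Integrable C P) {t q : ℝ} {Q Q' : Ω → ℝ}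
    (hQm : Measurable Q) (hQ'm : Measurable Q')
    (hQb : ∀ ω, 0 ≤ Q ω ∧ Q ω ≤ 1) (hQ'b : ∀ᵐ ω ∂P, 0 ≤ Q' ω ∧ Q' ω ≤ 1)
    (hlo : ∀ ω, C ω < t → Q ω = 0) (hhi : ∀ ω, t < C ω → Q ω = 1)
    (hEQ : (∫ ω, Q ω ∂P) = q) (hEQ' : (∫ ω, Q' ω ∂P) = q) :
    (∫ ω, C ω * Q' ω ∂P) ≤ ∫ ω, C ω * Q ω ∂P := by
  have hQb' : ∀ᵐ ω ∂P, 0 ≤ Q ω ∧ Q ω ≤ 1 := Filter.Eventually.of_forall hQb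
  have h1 : Integrable (fun ω => C ω * Q ω) P := my_int_mul hC hQm.aestronglyMeasurable hQb'
  have h2 : Integrable (fun ω => C ω * Q' ω) P := my_int_mul hC hQ'm.aestronglyMeasurable hQ'b
  have h3 : Integrable Q P := my_int_bdd hQm.aestronglyMeasurable hQb'
  have h4 : Integrable Q' P := my_int_bdd hQ'm.aestronglyMeasurable hQ'b
  have hg : (0:ℝ) ≤ ∫ ω, (C ω - t) * (Q ω - Q' ω) ∂P := by
    refine integral_nonneg_of_ae ?_
    filter_upwards [hQ'b] with ω h
    simp only [Pi.zero_apply]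
    rcases lt_trichotomy (C ω) t with hlt | heq | hgt
    · have h0 := hlo ω hlt
      nlinarith [h.1, h.2]
    · simp [heq]
    · have h0 := hhi ω hgt
      nlinarith [h.1, h.2]
  have hgint : Integrable (fun ω => (C ω - t) * (Q ω - Q' ω)) P := by
    refine (((h1.sub h2).sub (h3.const_mul t)).add (h4.const_mul t)).congr
      (Filter.Eventually.of_forall fun ω => ?_)
    simp only [Pi.sub_apply, Pi.add_apply]
    ring
  have key1 : (∫ ω, ((C ω - t) * (Q ω - Q' ω) + t * (Q ω - Q' ω)) ∂P)
      = (∫ ω, (C ω - t) * (Q ω - Q' ω) ∂P) + ∫ ω, t * (Q ω - Q' ω) ∂P :=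
    integral_add hgint ((h3.sub h4).const_mul t)
  have key2 : (∫ ω, ((C ω - t) * (Q ω - Q' ω) + t * (Q ω - Q' ω)) ∂P)
      = ∫ ω, (C ω * Q ω - C ω * Q' ω) ∂P := by
    refine integral_congr_ae (Filter.Eventually.of_forall fun ω => ?_)
    ring
  have key3 : (∫ ω, (C ω * Q ω - C ω * Q' ω) ∂P)
      = (∫ ω, C ω * Q ω ∂P) - ∫ ω, C ω * Q' ω ∂P := integral_sub h1 h2
  have key4 : (∫ ω, t * (Q ω - Q' ω) ∂P)
      = t * ((∫ ω, Q ω ∂P) - ∫ ω, Q' ω ∂P) := by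
    rw [integral_const_mul, integral_sub h3 h4]
  rw [key2, key3, key4, hEQ, hEQ'] at key1
  simp only [sub_self, mul_zero, add_zero] at key1
  linarith

/-- Existence of a quantile threshold. -/
lemma my_threshold {C : Ω → ℝ} (hCm : Measurable C) {q : ℝ} (h0 : 0 < q) (h1 : q < 1) :
    ∃ t : ℝ, P {ω | t < C ω} ≤ ENNReal.ofReal q ∧ ENNReal.ofReal q ≤ P {ω | t ≤ C ω} := by
  set S : Set ℝ := {s | P {ω | s < C ω} ≤ ENNReal.ofReal q} with hS
  have hmono : ∀ {s s' : ℝ}, s ≤ s' → P {ω | s' < C ω} ≤ P {ω | s < C ω} := by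
    intro s s' hss
    exact measure_mono (fun ω hω => lt_of_le_of_lt hss hω)
  have hup : ∀ {s s' : ℝ}, s ∈ S → s ≤ s' → s' ∈ S := fun hs hss => le_trans (hmono hss) hs
  -- S is nonempty
  have hSne : S.Nonempty := by
    have hint : P (⋂ n : ℕ, {ω | (n:ℝ) < C ω}) = ⨅ n : ℕ, P {ω | (n:ℝ) < C ω} := by
      refine Directed.measure_iInter
        (fun n => (measurableSet_lt measurable_const hCm).nullMeasurableSet) ?_
        ⟨0, measure_ne_top _ _⟩
      intro m n
      refine ⟨max m n, fun ω hω => ?_, fun ω hω => ?_⟩ <;>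
        simp only [Set.mem_setOf_eq] at hω ⊢
      · have hc : ((m:ℕ):ℝ) ≤ ((max m n : ℕ):ℝ) := by exact_mod_cast le_max_left m n
        linarith
      · have hc : ((n:ℕ):ℝ) ≤ ((max m n : ℕ):ℝ) := by exact_mod_cast le_max_right m n
        linarith
    have hempty : (⋂ n : ℕ, {ω | (n:ℝ) < C ω}) = ∅ := by
      ext ω; simp only [Set.mem_iInter, Set.mem_setOf_eq, Set.mem_empty_iff_false, iff_false]
      intro hall
      obtain ⟨n, hn⟩ := exists_nat_gt (C ω)
      exact absurd (hall n) (not_lt.2 hn.le)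
    rw [hempty, measure_empty] at hint
    have hlt : (⨅ n : ℕ, P {ω | (n:ℝ) < C ω}) < ENNReal.ofReal q := by
      rw [← hint]; exact ENNReal.ofReal_pos.2 h0
    obtain ⟨n, hn⟩ := iInf_lt_iff.1 hlt
    exact ⟨n, hn.le⟩
  -- S is bounded below
  obtain ⟨s₀, hs₀⟩ : ∃ s₀ : ℝ, ENNReal.ofReal q < P {ω | s₀ < C ω} := by
    have huni : P (⋃ n : ℕ, {ω | (-(n:ℝ)) < C ω}) = ⨆ n : ℕ, P {ω | (-(n:ℝ)) < C ω} := by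
      refine Directed.measure_iUnion ?_
      intro m n
      refine ⟨max m n, fun ω hω => ?_, fun ω hω => ?_⟩ <;>
        simp only [Set.mem_setOf_eq] at hω ⊢
      · have hc : ((m:ℕ):ℝ) ≤ ((max m n : ℕ):ℝ) := by exact_mod_cast le_max_left m n
        linarith
      · have hc : ((n:ℕ):ℝ) ≤ ((max m n : ℕ):ℝ) := by exact_mod_cast le_max_right m n
        linarith
    have hall : (⋃ n : ℕ, {ω | (-(n:ℝ)) < C ω}) = Set.univ := by
      ext ω; simp only [Set.mem_iUnion, Set.mem_setOf_eq, Set.mem_univ, iff_true]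
      obtain ⟨n, hn⟩ := exists_nat_gt (-(C ω))
      exact ⟨n, by linarith⟩
    rw [hall, measure_univ] at huni
    have hlt : ENNReal.ofReal q < ⨆ n : ℕ, P {ω | (-(n:ℝ)) < C ω} := by
      rw [← huni]; exact ENNReal.ofReal_lt_one.2 h1
    obtain ⟨n, hn⟩ := lt_iSup_iff.1 hlt
    exact ⟨-(n:ℝ), hn⟩
  have hSbdd : BddBelow S := by
    refine ⟨s₀, fun s hs => ?_⟩
    by_contra hcon
    push_neg at hcon
    exact absurd (le_trans (hmono hcon.le) hs) (not_le.2 hs₀)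
  set t := sInf S with ht
  refine ⟨t, ?_, ?_⟩
  · -- P {t < C} ≤ q
    have hsets : {ω | t < C ω} = ⋃ n : ℕ, {ω | t + ((n:ℝ)+1)⁻¹ < C ω} := by
      ext ω; simp only [Set.mem_iUnion, Set.mem_setOf_eq]
      constructor
      · intro h
        obtain ⟨n, hn⟩ := exists_nat_one_div_lt (sub_pos.2 h)
        exact ⟨n, by rw [one_div] at hn; linarith⟩
      · rintro ⟨n, hn⟩
        have hp : (0:ℝ) < ((n:ℝ)+1)⁻¹ := by positivity
        linarith
    have hdir : Directed (· ⊆ ·) (fun n : ℕ => {ω | t + ((n:ℝ)+1)⁻¹ < C ω}) := by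
      intro m n
      refine ⟨max m n, fun ω hω => ?_, fun ω hω => ?_⟩ <;>
        simp only [Set.mem_setOf_eq] at hω ⊢
      · have hc : ((m:ℕ):ℝ) ≤ ((max m n : ℕ):ℝ) := by exact_mod_cast le_max_left m n
        have h2 : (((max m n : ℕ):ℝ)+1)⁻¹ ≤ ((m:ℝ)+1)⁻¹ := by gcongr <;> linarith
        linarith
      · have hc : ((n:ℕ):ℝ) ≤ ((max m n : ℕ):ℝ) := by exact_mod_cast le_max_right m n
        have h2 : (((max m n : ℕ):ℝ)+1)⁻¹ ≤ ((n:ℝ)+1)⁻¹ := by gcongr <;> linarith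
        linarith
    rw [hsets, Directed.measure_iUnion hdir]
    refine iSup_le fun n => ?_
    have hpos : (0:ℝ) < ((n:ℝ)+1)⁻¹ := by positivity
    obtain ⟨s, hsS, hst⟩ := exists_lt_of_csInf_lt hSne (by linarith : sInf S < t + ((n:ℝ)+1)⁻¹)
    exact hup hsS hst.le
  · -- q ≤ P {t ≤ C}
    have hsets : {ω | t ≤ C ω} = ⋂ n : ℕ, {ω | t - ((n:ℝ)+1)⁻¹ < C ω} := by
      ext ω; simp only [Set.mem_iInter, Set.mem_setOf_eq]
      constructor
      · intro h n
        have hp : (0:ℝ) < ((n:ℝ)+1)⁻¹ := by positivity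
        linarith
      · intro hall
        by_contra hcon
        push_neg at hcon
        obtain ⟨n, hn⟩ := exists_nat_one_div_lt (sub_pos.2 hcon)
        rw [one_div] at hn
        have := hall n
        linarith
    have hdir : Directed (· ⊇ ·) (fun n : ℕ => {ω | t - ((n:ℝ)+1)⁻¹ < C ω}) := by
      intro m n
      refine ⟨max m n, fun ω hω => ?_, fun ω hω => ?_⟩ <;>
        simp only [Set.mem_setOf_eq] at hω ⊢
      · have hc : ((m:ℕ):ℝ) ≤ ((max m n : ℕ):ℝ) := by exact_mod_cast le_max_left m n
        have h2 : (((max m n : ℕ):ℝ)+1)⁻¹ ≤ ((m:ℝ)+1)⁻¹ := by gcongr <;> linarith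
        linarith
      · have hc : ((n:ℕ):ℝ) ≤ ((max m n : ℕ):ℝ) := by exact_mod_cast le_max_right m n
        have h2 : (((max m n : ℕ):ℝ)+1)⁻¹ ≤ ((n:ℝ)+1)⁻¹ := by gcongr <;> linarith
        linarith
    rw [hsets, Directed.measure_iInter
      (fun n => (measurableSet_lt measurable_const hCm).nullMeasurableSet) hdir
      ⟨0, measure_ne_top _ _⟩]
    refine le_iInf fun n => ?_
    have hpos : (0:ℝ) < ((n:ℝ)+1)⁻¹ := by positivity
    have hnot : t - ((n:ℝ)+1)⁻¹ ∉ S := fun hmem =>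
      absurd (csInf_le hSbdd hmem) (not_le.2 (by linarith))
    exact le_of_not_ge (fun hle => hnot hle)

/-- An admissible maximizer exists. -/
lemma my_max_exists {Ω : Type*} [MeasurableSpace Ω] (P : Measure Ω)
    [IsProbabilityMeasure P] (C : Ω → ℝ) (hC : Integrable C P)
    {q : ℝ} (hq : q ∈ Set.Icc (0 : ℝ) 1) :
    ∃ Q : Ω → ℝ, Measurable Q ∧ (∀ᵐ ω ∂P, 0 ≤ Q ω ∧ Q ω ≤ 1) ∧ (∫ ω, Q ω ∂P) = q ∧
      ∀ Q' : Ω → ℝ, Measurable Q' → (∀ᵐ ω ∂P, 0 ≤ Q' ω ∧ Q' ω ≤ 1) → (∫ ω, Q' ω ∂P) = q →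
        (∫ ω, C ω * Q' ω ∂P) ≤ ∫ ω, C ω * Q ω ∂P := by
  obtain ⟨hq0, hq1⟩ := hq
  rcases eq_or_lt_of_le hq0 with hq0' | hq0'
  · -- q = 0 : take Q = 0
    refine ⟨fun _ => 0, measurable_const,
      Filter.Eventually.of_forall (fun ω => by norm_num), by simp [← hq0'], ?_⟩
    intro Q' hQ'm hQ'b hQ'q
    have hae : Q' =ᵐ[P] fun _ => (0:ℝ) := by
      have hint : Integrable Q' P := my_int_bdd hQ'm.aestronglyMeasurable hQ'b
      have hnn : 0 ≤ᵐ[P] Q' := by filter_upwards [hQ'b] with ω h using h.1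
      have := (integral_eq_zero_iff_of_nonneg_ae hnn hint).1 (by rw [hQ'q, ← hq0'])
      filter_upwards [this] with ω h using h
    have : (∫ ω, C ω * Q' ω ∂P) = ∫ ω, C ω * 0 ∂P := by
      refine integral_congr_ae ?_
      filter_upwards [hae] with ω h
      rw [h]
    simp [this]
  rcases eq_or_lt_of_le hq1 with hq1' | hq1'
  · -- q = 1 : take Q = 1
    refine ⟨fun _ => 1, measurable_const,
      Filter.Eventually.of_forall (fun ω => by norm_num), by simp [hq1'], ?_⟩
    intro Q' hQ'm hQ'b hQ'q
    have hae : Q' =ᵐ[P] fun _ => (1:ℝ) := by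
      have hint : Integrable (fun ω => 1 - Q' ω) P :=
        (integrable_const 1).sub (my_int_bdd hQ'm.aestronglyMeasurable hQ'b)
      have hnn : 0 ≤ᵐ[P] fun ω => 1 - Q' ω := by
        filter_upwards [hQ'b] with ω h
        simp only [Pi.zero_apply]
        linarith [h.2]
      have hzero : (∫ ω, (1 - Q' ω) ∂P) = 0 := by
        rw [integral_sub (integrable_const 1) (my_int_bdd hQ'm.aestronglyMeasurable hQ'b), hQ'q]
        simp [hq1']
      have := (integral_eq_zero_iff_of_nonneg_ae hnn hint).1 hzero
      filter_upwards [this] with ω h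
      have : (1:ℝ) - Q' ω = 0 := h
      linarith
    have : (∫ ω, C ω * Q' ω ∂P) = ∫ ω, C ω * 1 ∂P := by
      refine integral_congr_ae ?_
      filter_upwards [hae] with ω h
      rw [h]
    simp [this]
  -- 0 < q < 1 : threshold construction, using a measurable representative of C
  set C' : Ω → ℝ := hC.1.mk C with hC'def
  have hC'm : Measurable C' := hC.1.stronglyMeasurable_mk.measurable
  have hCC' : C =ᵐ[P] C' := hC.1.ae_eq_mk
  have hC'int : Integrable C' P := hC.congr hCC'
  obtain ⟨t, hta, htb⟩ := my_threshold (P := P) hC'm hq0' hq1'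
  set A : Set Ω := {ω | t < C' ω} with hA
  set B : Set Ω := {ω | C' ω = t} with hB
  have hAm : MeasurableSet A := measurableSet_lt measurable_const hC'm
  have hBm : MeasurableSet B := by
    have : B = C' ⁻¹' {t} := rfl
    rw [this]; exact hC'm (measurableSet_singleton t)
  set a : ℝ := (P A).toReal with ha
  set b : ℝ := (P B).toReal with hb
  have hb0 : 0 ≤ b := ENNReal.toReal_nonneg
  have haq : a ≤ q := ENNReal.toReal_le_of_le_ofReal hq0 hta
  have hABdisj : Disjoint A B := by
    rw [Set.disjoint_left]
    intro ω hωA hωB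
    exact absurd hωB (ne_of_gt hωA)
  have hABunion : {ω | t ≤ C' ω} = A ∪ B := by
    ext ω
    simp only [Set.mem_setOf_eq, Set.mem_union, hA, hB]
    constructor
    · intro h; rcases eq_or_lt_of_le h with h' | h'
      · exact Or.inr h'.symm
      · exact Or.inl h'
    · rintro (h | h)
      · exact le_of_lt h
      · exact le_of_eq h.symm
  have hqab : q ≤ a + b := by
    have := htb
    rw [hABunion, measure_union hABdisj hBm] at this
    have h2 : q ≤ ((P A) + (P B)).toReal :=
      (ENNReal.ofReal_le_iff_le_toReal (by
        exact ENNReal.add_ne_top.2 ⟨measure_ne_top _ _, measure_ne_top _ _⟩)).1 this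
    rwa [ENNReal.toReal_add (measure_ne_top _ _) (measure_ne_top _ _)] at h2
  set θ : ℝ := if b = 0 then 0 else (q - a) / b with hθ
  have hθ0 : 0 ≤ θ := by
    rw [hθ]; split
    · norm_num
    · exact div_nonneg (by linarith) hb0
  have hθ1 : θ ≤ 1 := by
    rw [hθ]; split
    · norm_num
    · rename_i hbne
      rw [div_le_one (lt_of_le_of_ne hb0 (Ne.symm hbne))]
      linarith
  set Q : Ω → ℝ := fun ω => A.indicator (fun _ => (1:ℝ)) ω + B.indicator (fun _ => θ) ω
    with hQdef
  have hQm : Measurable Q :=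
    ((measurable_const (a := (1:ℝ))).indicator hAm).add
      ((measurable_const (a := θ)).indicator hBm)
  have hQval : ∀ ω, Q ω = if t < C' ω then 1 else if C' ω = t then θ else 0 := by
    intro ω
    rw [hQdef]
    by_cases h1 : t < C' ω
    · have h2 : C' ω ≠ t := ne_of_gt h1
      simp [Set.indicator_apply, hA, hB, h1, h2]
    · by_cases h2 : C' ω = t
      · simp [Set.indicator_apply, hA, hB, h1, h2]
      · simp [Set.indicator_apply, hA, hB, h1, h2]
  have hQb : ∀ ω, 0 ≤ Q ω ∧ Q ω ≤ 1 := by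
    intro ω
    rw [hQval ω]
    split
    · norm_num
    · split
      · exact ⟨hθ0, hθ1⟩
      · norm_num
  have hQint : (∫ ω, Q ω ∂P) = q := by
    have h1 : (∫ ω, Q ω ∂P)
        = (∫ ω, A.indicator (fun _ => (1:ℝ)) ω ∂P) + ∫ ω, B.indicator (fun _ => θ) ω ∂P := by
      refine integral_add ?_ ?_
      · exact (integrable_const (1:ℝ)).indicator hAm
      · exact (integrable_const θ).indicator hBm
    rw [h1, integral_indicator_const _ hAm, integral_indicator_const _ hBm]
    simp only [smul_eq_mul, mul_one, measureReal_def, ← ha, ← hb]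
    rw [hθ]
    split
    · rename_i hbz
      rw [hbz] at hqab
      linarith [le_antisymm haq (by linarith : q ≤ a)]
    · rename_i hbz
      field_simp
      ring
  have hlo : ∀ ω, C' ω < t → Q ω = 0 := by
    intro ω h
    rw [hQval ω, if_neg (by linarith), if_neg (by linarith)]
  have hhi : ∀ ω, t < C' ω → Q ω = 1 := by
    intro ω h
    rw [hQval ω, if_pos h]
  refine ⟨Q, hQm, Filter.Eventually.of_forall hQb, hQint, ?_⟩
  intro Q' hQ'm hQ'b hQ'q
  have hcongr : ∀ (R : Ω → ℝ), (∫ ω, C ω * R ω ∂P) = ∫ ω, C' ω * R ω ∂P := by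
    intro R
    refine integral_congr_ae ?_
    filter_upwards [hCC'] with ω h
    rw [h]
  rw [hcongr Q, hcongr Q']
  exact my_key_le hC'int hQm hQ'm hQb hQ'b hlo hhi hQint hQ'q

end Helpers

/-- The supremum defining `scvar_q[C]` is attained: there is an admissible `Q` whose
objective value equals `scvar_q[C]` and dominates every other admissible `Q'`. -/
theorem scvar_sup_attained {Ω : Type*} [MeasurableSpace Ω] (P : Measure Ω)
    [IsProbabilityMeasure P] (C : Ω → ℝ) (hC : Integrable C P)
    {q : ℝ} (hq : q ∈ Set.Icc (0 : ℝ) 1) :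
    ∃ Q : Ω → ℝ, Measurable Q ∧ (∀ᵐ ω ∂P, 0 ≤ Q ω ∧ Q ω ≤ 1) ∧ (∫ ω, Q ω ∂P) = q ∧
      (∫ ω, C ω * Q ω ∂P) = scvar P C q ∧
      ∀ Q' : Ω → ℝ, Measurable Q' → (∀ᵐ ω ∂P, 0 ≤ Q' ω ∧ Q' ω ≤ 1) → (∫ ω, Q' ω ∂P) = q →
        (∫ ω, C ω * Q' ω ∂P) ≤ ∫ ω, C ω * Q ω ∂P := by
  obtain ⟨Q, hQm, hQb, hQq, hmax⟩ := my_max_exists P C hC hq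
  refine ⟨Q, hQm, hQb, hQq, ?_, hmax⟩
  have hmem : (∫ ω, C ω * Q ω ∂P) ∈ {y : ℝ | ∃ Q : Ω → ℝ, Measurable Q ∧
      (∀ᵐ ω ∂P, 0 ≤ Q ω ∧ Q ω ≤ 1) ∧ (∫ ω, Q ω ∂P) = q ∧ y = ∫ ω, C ω * Q ω ∂P} :=
    ⟨Q, hQm, hQb, hQq, rfl⟩
  have hub : ∀ y ∈ {y : ℝ | ∃ Q : Ω → ℝ, Measurable Q ∧
      (∀ᵐ ω ∂P, 0 ≤ Q ω ∧ Q ω ≤ 1) ∧ (∫ ω, Q ω ∂P) = q ∧ y = ∫ ω, C ω * Q ω ∂P},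
      y ≤ ∫ ω, C ω * Q ω ∂P := by
    rintro y ⟨Q', hQ'm, hQ'b, hQ'q, rfl⟩
    exact hmax Q' hQ'm hQ'b hQ'q
  exact le_antisymm (le_csSup ⟨_, hub⟩ hmem) (csSup_le ⟨_, hmem⟩ hub)
end

section
/- Let C be a real random variable on a probability space whose law is the Gaussian measure with mean μ ∈ ℝ and variance σ² with σ > 0. Let q ∈ (0,1) and let z ∈ ℝ satisfy Φ(z) = 1 − q, where Φ is the cumulative distribution function of the standard Gaussian measure. Then scvar_q[C] = q·μ + σ·φ_pdf(z), where φ_pdf is the density of the standard Gaussian measure; equivalently, cvar_q[C] = μ + σ·φ_pdf(z)/q. -/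
open MeasureTheory ProbabilityTheory

open Real Set Filter


lemma pdf01_eq (x : ℝ) : gaussianPDFReal 0 1 x = (Real.sqrt (2 * π))⁻¹ * Real.exp (-x ^ 2 / 2) := by
  simp [gaussianPDFReal]

lemma pdf01_deriv (x : ℝ) :
    HasDerivAt (fun y => -gaussianPDFReal 0 1 y) (x * gaussianPDFReal 0 1 x) x := by
  have h1 : HasDerivAt (fun y : ℝ => -y ^ 2 / 2) (-x) x := by
    have := ((hasDerivAt_pow 2 x).neg).div_const 2
    simpa using this.congr_deriv (by ring)
  have h2 : HasDerivAt (fun y : ℝ => Real.exp (-y ^ 2 / 2)) (Real.exp (-x ^ 2 / 2) * (-x)) x :=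
    h1.exp
  have h3 := (h2.const_mul (Real.sqrt (2 * π))⁻¹).neg
  have : (fun y => -gaussianPDFReal 0 1 y) = fun y => -((Real.sqrt (2 * π))⁻¹ * Real.exp (-y ^ 2 / 2)) := by
    funext y; rw [pdf01_eq]
  rw [this, pdf01_eq]
  exact h3.congr_deriv (by ring)

lemma pdf01_integrable_mul : Integrable (fun x => x * gaussianPDFReal 0 1 x) := by
  have h := (integrable_mul_exp_neg_mul_sq (b := 1/2) (by norm_num)).const_mul (Real.sqrt (2 * π))⁻¹
  refine h.congr (ae_of_all _ fun x => ?_)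
  simp only [pdf01_eq]
  ring_nf

lemma pdf01_tendsto : Tendsto (fun x => -gaussianPDFReal 0 1 x) atTop (nhds 0) := by
  have h : Tendsto (fun x : ℝ => -x ^ 2 / 2) atTop atBot := by
    apply Tendsto.atBot_div_const (by norm_num)
    exact tendsto_neg_atBot_iff.mpr (tendsto_pow_atTop (by norm_num))
  have := (Real.tendsto_exp_atBot.comp h).const_mul (Real.sqrt (2 * π))⁻¹
  simp only [mul_zero] at this
  have h2 : Tendsto (fun x => gaussianPDFReal 0 1 x) atTop (nhds 0) := by
    refine this.congr fun x => ?_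
    rw [pdf01_eq]; rfl
  simpa using h2.neg

lemma pdf01_integral_Ioi (z : ℝ) :
    ∫ x in Ioi z, x * gaussianPDFReal 0 1 x = gaussianPDFReal 0 1 z := by
  have := integral_Ioi_of_hasDerivAt_of_tendsto' (a := z)
    (fun x _ => pdf01_deriv x) pdf01_integrable_mul.integrableOn pdf01_tendsto
  simpa using this


lemma gauss_map (μ σ : ℝ) (hσ : 0 < σ) :
    (gaussianReal 0 1).map (fun x => σ * x + μ) = gaussianReal μ (Real.toNNReal (σ ^ 2)) := by
  have hcomp : (fun x : ℝ => σ * x + μ) = (· + μ) ∘ (σ * ·) := rfl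
  rw [hcomp, ← Measure.map_map (measurable_id'.add_const μ) (measurable_id'.const_mul σ),
    gaussianReal_map_const_mul, gaussianReal_map_add_const]
  congr 1
  · ring
  · ext
    simp [Real.coe_toNNReal _ (sq_nonneg σ)]

lemma gauss_withDensity :
    gaussianReal 0 1 = volume.withDensity (fun x => ((gaussianPDFReal 0 1 x).toNNReal : ENNReal)) := by
  rw [gaussianReal_of_var_ne_zero _ one_ne_zero]
  rfl

lemma gauss_integrable_id : Integrable (fun x => x) (gaussianReal 0 1) := by
  rw [gauss_withDensity,
    integrable_withDensity_iff_integrable_smul (measurable_gaussianPDFReal 0 1).real_toNNReal]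
  refine pdf01_integrable_mul.congr (ae_of_all _ fun x => ?_)
  simp [NNReal.smul_def, Real.coe_toNNReal _ (gaussianPDFReal_nonneg 0 1 x), mul_comm]

lemma gauss_integral_Ioi (z : ℝ) :
    ∫ x in Ioi z, x ∂(gaussianReal 0 1) = gaussianPDFReal 0 1 z := by
  rw [gauss_withDensity, restrict_withDensity measurableSet_Ioi,
    integral_withDensity_eq_integral_smul (measurable_gaussianPDFReal 0 1).real_toNNReal]
  rw [← pdf01_integral_Ioi z]
  refine setIntegral_congr_fun measurableSet_Ioi fun x _ => ?_
  simp [NNReal.smul_def, Real.coe_toNNReal _ (gaussianPDFReal_nonneg 0 1 x), mul_comm]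

/-- If `C` is Gaussian with mean `μ` and variance `σ²`, `q ∈ (0,1)` and `Φ(z) = 1 − q`,
then `scvar_q[C] = q·μ + σ·φ_pdf(z)`; equivalently `cvar_q[C] = μ + σ·φ_pdf(z)/q`. -/
theorem scvar_gaussian {Ω : Type*} [MeasurableSpace Ω] (P : Measure Ω)
    [IsProbabilityMeasure P] (C : Ω → ℝ) (hC : Integrable C P) (hCm : Measurable C)
    (μ σ : ℝ) (hσ : 0 < σ)
    (hlaw : P.map C = gaussianReal μ (Real.toNNReal (σ ^ 2)))
    {q : ℝ} (hq : q ∈ Set.Ioo (0 : ℝ) 1) {z : ℝ}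
    (hz : gaussianReal 0 1 (Set.Iic z) = ENNReal.ofReal (1 - q)) :
    scvar P C q = q * μ + σ * gaussianPDFReal 0 1 z ∧
    scvar P C q / q = μ + σ * gaussianPDFReal 0 1 z / q := by
  obtain ⟨hq0, hq1⟩ := hq
  set M : ℝ := q * μ + σ * gaussianPDFReal 0 1 z with hM
  set c : ℝ := σ * z + μ with hc
  have hpre : (fun x => σ * x + μ) ⁻¹' (Ioi c) = Ioi z := by
    ext x
    simp only [mem_preimage, mem_Ioi, hc]
    constructor <;> intro h <;> nlinarith
  have hmap := gauss_map μ σ hσ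
  have hφm : Measurable fun x : ℝ => σ * x + μ := (measurable_id.const_mul σ).add_const μ
  have hIoi : gaussianReal 0 1 (Ioi z) = ENNReal.ofReal q := by
    rw [← compl_Iic, measure_compl measurableSet_Iic (measure_ne_top _ _), hz, measure_univ]
    refine (ENNReal.eq_sub_of_add_eq ENNReal.ofReal_ne_top ?_).symm
    rw [← ENNReal.ofReal_add hq0.le (by linarith)]
    norm_num
  have hPset : P (C ⁻¹' Ioi c) = ENNReal.ofReal q := by
    rw [← Measure.map_apply hCm measurableSet_Ioi, hlaw, ← hmap,
      Measure.map_apply hφm measurableSet_Ioi, hpre, hIoi]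
  set Q₀ : Ω → ℝ := fun ω => if c < C ω then (1 : ℝ) else 0 with hQ₀
  have hsm : MeasurableSet (C ⁻¹' Ioi c) := hCm measurableSet_Ioi
  have hQ₀eq : Q₀ = Set.indicator (C ⁻¹' Ioi c) (fun _ => 1) := by
    funext ω
    by_cases h : c < C ω <;> simp [hQ₀, h, Set.indicator_apply, mem_Ioi]
  have hQ₀m : Measurable Q₀ := by
    rw [hQ₀eq]; exact (measurable_const.indicator hsm)
  have hQ₀int : ∫ ω, Q₀ ω ∂P = q := by
    rw [hQ₀eq, integral_indicator hsm, setIntegral_const, measureReal_def, hPset, smul_eq_mul, mul_one,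
      ENNReal.toReal_ofReal hq0.le]
  have hCQ₀ : ∫ ω, C ω * Q₀ ω ∂P = M := by
    have hg : (fun ω => C ω * Q₀ ω) = (fun x => Set.indicator (Ioi c) id x) ∘ C := by
      funext ω
      by_cases h : c < C ω <;> simp [hQ₀, h, Set.indicator_apply, mem_Ioi]
    calc ∫ ω, C ω * Q₀ ω ∂P = ∫ x, Set.indicator (Ioi c) id x ∂(P.map C) := by
          rw [hg, integral_map hCm.aemeasurable
            (measurable_id.indicator measurableSet_Ioi).aestronglyMeasurable]
          rfl
      _ = ∫ x in Ioi c, x ∂(gaussianReal μ (Real.toNNReal (σ ^ 2))) := by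
          rw [hlaw, integral_indicator measurableSet_Ioi]; rfl
      _ = ∫ x in Ioi z, (σ * x + μ) ∂(gaussianReal 0 1) := by
          rw [← hmap, setIntegral_map (f := fun x : ℝ => x) measurableSet_Ioi
            measurable_id.aestronglyMeasurable hφm.aemeasurable, hpre]
      _ = M := by
          rw [integral_add ((gauss_integrable_id.const_mul σ).integrableOn) (integrable_const μ),
            integral_const_mul, gauss_integral_Ioi, setIntegral_const, measureReal_def, hIoi, smul_eq_mul,
            ENNReal.toReal_ofReal hq0.le, hM]
          ring
  have hQ₀01 : ∀ ω, 0 ≤ Q₀ ω ∧ Q₀ ω ≤ 1 := by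
    intro ω; by_cases h : c < C ω <;> simp [hQ₀, h]
  have intCQ₀ : Integrable (fun ω => C ω * Q₀ ω) P := by
    refine hC.abs.mono' (hCm.mul hQ₀m).aestronglyMeasurable (ae_of_all _ fun ω => ?_)
    rw [Real.norm_eq_abs, abs_mul]
    obtain ⟨h0, h1⟩ := hQ₀01 ω
    calc |C ω| * |Q₀ ω| ≤ |C ω| * 1 := by
          gcongr
          rw [abs_of_nonneg h0]; exact h1
      _ = |C ω| := mul_one _
  have hmem : M ∈ {y : ℝ | ∃ Q : Ω → ℝ, Measurable Q ∧ (∀ᵐ ω ∂P, 0 ≤ Q ω ∧ Q ω ≤ 1) ∧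
      (∫ ω, Q ω ∂P) = q ∧ y = ∫ ω, C ω * Q ω ∂P} :=
    ⟨Q₀, hQ₀m, ae_of_all _ hQ₀01, hQ₀int, hCQ₀.symm⟩
  have hub : ∀ y ∈ {y : ℝ | ∃ Q : Ω → ℝ, Measurable Q ∧ (∀ᵐ ω ∂P, 0 ≤ Q ω ∧ Q ω ≤ 1) ∧
      (∫ ω, Q ω ∂P) = q ∧ y = ∫ ω, C ω * Q ω ∂P}, y ≤ M := by
    rintro y ⟨Q, hQm, hQ01, hQint, rfl⟩
    have intCQ : Integrable (fun ω => C ω * Q ω) P := by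
      refine hC.abs.mono' (hCm.mul hQm).aestronglyMeasurable ?_
      filter_upwards [hQ01] with ω hω
      rw [Real.norm_eq_abs, abs_mul]
      calc |C ω| * |Q ω| ≤ |C ω| * 1 := by
            gcongr
            rw [abs_of_nonneg hω.1]; exact hω.2
        _ = |C ω| := mul_one _
    have intQ : Integrable Q P := by
      refine (integrable_const (1 : ℝ)).mono' hQm.aestronglyMeasurable ?_
      filter_upwards [hQ01] with ω hω
      rw [Real.norm_eq_abs, abs_of_nonneg hω.1]; exact hω.2
    have intQ₀ : Integrable Q₀ P := by
      refine (integrable_const (1 : ℝ)).mono' hQ₀m.aestronglyMeasurable (ae_of_all _ fun ω => ?_)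
      rw [Real.norm_eq_abs, abs_of_nonneg (hQ₀01 ω).1]; exact (hQ₀01 ω).2
    have key : 0 ≤ ∫ ω, (C ω - c) * (Q₀ ω - Q ω) ∂P := by
      refine integral_nonneg_of_ae ?_
      filter_upwards [hQ01] with ω hω
      simp only [Pi.zero_apply]
      by_cases h : c < C ω
      · simp only [hQ₀, if_pos h]; nlinarith [hω.1, hω.2]
      · simp only [hQ₀, if_neg h]; push_neg at h; nlinarith [hω.1, hω.2]
    have hsplit : ∫ ω, (C ω - c) * (Q₀ ω - Q ω) ∂P
        = (∫ ω, C ω * Q₀ ω ∂P) - ∫ ω, C ω * Q ω ∂P := by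
      have e : (fun ω => (C ω - c) * (Q₀ ω - Q ω))
          = fun ω => (C ω * Q₀ ω - C ω * Q ω) - (c * Q₀ ω - c * Q ω) := by
        funext ω; ring
      have i1 : Integrable (fun ω => C ω * Q₀ ω - C ω * Q ω) P := intCQ₀.sub intCQ
      have i2 : Integrable (fun ω => c * Q₀ ω - c * Q ω) P :=
        (intQ₀.const_mul c).sub (intQ.const_mul c)
      have i3 : Integrable (fun ω => c * Q₀ ω) P := intQ₀.const_mul c
      have i4 : Integrable (fun ω => c * Q ω) P := intQ.const_mul c
      rw [e, integral_sub i1 i2, integral_sub intCQ₀ intCQ, integral_sub i3 i4,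
        integral_const_mul, integral_const_mul, hQ₀int, hQint]
      ring
    rw [hsplit, hCQ₀] at key
    linarith
  have h1 : scvar P C q = M :=
    le_antisymm (csSup_le ⟨M, hmem⟩ hub) (le_csSup ⟨M, hub⟩ hmem)
  refine ⟨h1, ?_⟩
  rw [h1, hM]
  field_simp
end

section
/- Let a, b > 0 and x ∈ ℝ. For every continuously differentiable function f : [0,∞) → ℝ with f(0) = x, f(t) → 0 as t → ∞, and with ∫₀^∞ f'(t)² dt < ∞ and ∫₀^∞ f(t)² dt < ∞, one has ∫₀^∞ ( a·f'(t)² + b·f(t)² ) dt ≥ √(a·b) · x². Moreover, equality holds for the exponential schedule f(t) = x·exp(−t/ρ) with ρ = √(a/b), for which ∫₀^∞ a·f'(t)² dt = ∫₀^∞ b·f(t)² dt = √(a·b)·x²/2. -/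
open MeasureTheory Filter

lemma exp_int (c : ℝ) (hc : 0 < c) :
    ∫ t in Set.Ioi (0:ℝ), Real.exp (-(c * t)) = 1 / c := by
  have hderiv : ∀ t ∈ Set.Ioi (0:ℝ),
      HasDerivAt (fun t => -(1/c) * Real.exp (-(c * t))) (Real.exp (-(c * t))) t := by
    intro t ht
    have h1 : HasDerivAt (fun t : ℝ => -(c * t)) (-c) t := by
      simpa using ((hasDerivAt_id t).const_mul c).fun_neg
    have := (h1.exp).const_mul (-(1/c))
    refine this.congr_deriv ?_
    field_simp
  have hint : IntegrableOn (fun t => Real.exp (-(c * t))) (Set.Ioi (0:ℝ)) := by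
    simpa [mul_comm] using exp_neg_integrableOn_Ioi 0 hc
  have htend : Tendsto (fun t => -(1/c) * Real.exp (-(c * t))) atTop (nhds 0) := by
    have h2 : Tendsto (fun t : ℝ => -(c * t)) atTop atBot := by
      apply tendsto_neg_atBot_iff.2
      exact Tendsto.const_mul_atTop hc tendsto_id
    have : Tendsto (fun t : ℝ => Real.exp (-(c * t))) atTop (nhds 0) :=
      Real.tendsto_exp_atBot.comp h2
    simpa using this.const_mul (-(1/c))
  have hcw : ContinuousWithinAt (fun t => -(1/c) * Real.exp (-(c * t)))
      (Set.Ici (0:ℝ)) 0 := by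
    apply Continuous.continuousWithinAt; continuity
  have := integral_Ioi_of_hasDerivAt_of_tendsto hcw hderiv hint htend
  simp at this
  rw [this]; ring

/-- Calculus-of-variations core of the optimal deterministic liquidation schedule:
for every C¹ trajectory `f` on `[0,∞)` with `f(0) = x`, `f(t) → 0` and square-integrable
`f`, `f'`, one has `∫₀^∞ (a f'² + b f²) ≥ √(ab) x²`; equality holds for the exponential
schedule `f(t) = x e^{−t/ρ}` with `ρ = √(a/b)`, each of whose two cost terms integrates
to `√(ab) x²/2`. -/
theorem exponential_schedule_optimal (a b x : ℝ) (ha : 0 < a) (hb : 0 < b) :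
    (∀ f f' : ℝ → ℝ,
      (∀ t ∈ Set.Ici (0 : ℝ), HasDerivWithinAt f (f' t) (Set.Ici (0 : ℝ)) t) →
      ContinuousOn f' (Set.Ici (0 : ℝ)) →
      f 0 = x →
      Tendsto f atTop (nhds 0) →
      IntegrableOn (fun t => (f' t) ^ 2) (Set.Ici (0 : ℝ)) →
      IntegrableOn (fun t => (f t) ^ 2) (Set.Ici (0 : ℝ)) →
      Real.sqrt (a * b) * x ^ 2 ≤ ∫ t in Set.Ici (0 : ℝ), (a * (f' t) ^ 2 + b * (f t) ^ 2)) ∧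
    ((∀ t : ℝ, HasDerivAt (fun s => x * Real.exp (-s / Real.sqrt (a / b)))
        (-(x / Real.sqrt (a / b)) * Real.exp (-t / Real.sqrt (a / b))) t) ∧
      (∫ t in Set.Ici (0 : ℝ), a * (-(x / Real.sqrt (a / b)) * Real.exp (-t / Real.sqrt (a / b))) ^ 2)
        = Real.sqrt (a * b) * x ^ 2 / 2 ∧
      (∫ t in Set.Ici (0 : ℝ), b * (x * Real.exp (-t / Real.sqrt (a / b))) ^ 2)
        = Real.sqrt (a * b) * x ^ 2 / 2) := by
  set ρ := Real.sqrt (a / b) with hρ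
  have hρpos : 0 < ρ := Real.sqrt_pos.2 (div_pos ha hb)
  have hsa : Real.sqrt a ^ 2 = a := Real.sq_sqrt ha.le
  have hsb : Real.sqrt b ^ 2 = b := Real.sq_sqrt hb.le
  have hsa0 : 0 < Real.sqrt a := Real.sqrt_pos.2 ha
  have hsb0 : 0 < Real.sqrt b := Real.sqrt_pos.2 hb
  have hsab : Real.sqrt (a * b) = Real.sqrt a * Real.sqrt b := Real.sqrt_mul ha.le b
  have hρab : ρ = Real.sqrt a / Real.sqrt b := by rw [hρ, Real.sqrt_div ha.le]
  constructor
  · intro f f' hderiv hcont hf0 hlim hint' hint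
    have hfc : ContinuousOn f (Set.Ici (0:ℝ)) := fun t ht => (hderiv t ht).continuousWithinAt
    have hg : ∀ t ∈ Set.Ioi (0:ℝ), HasDerivAt (fun s => (f s)^2) (2 * f t * f' t) t := by
      intro t ht
      have h := (hderiv t (Set.Ioi_subset_Ici_self ht)).hasDerivAt (Ici_mem_nhds ht)
      simpa [mul_comm, mul_assoc] using h.fun_pow 2
    have hmeas : AEStronglyMeasurable (fun t => 2 * f t * f' t)
        (volume.restrict (Set.Ioi (0:ℝ))) := by
      have : ContinuousOn (fun t => 2 * f t * f' t) (Set.Ici (0:ℝ)) :=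
        (continuousOn_const.mul hfc).mul hcont
      exact ((this.aestronglyMeasurable measurableSet_Ici).mono_measure
        (Measure.restrict_mono Set.Ioi_subset_Ici_self le_rfl))
    have hintsum : IntegrableOn (fun t => (f' t)^2 + (f t)^2) (Set.Ici (0:ℝ)) :=
      hint'.add hint
    have hgint : IntegrableOn (fun t => 2 * f t * f' t) (Set.Ioi (0:ℝ)) := by
      refine Integrable.mono (hintsum.mono_set Set.Ioi_subset_Ici_self) hmeas ?_
      filter_upwards with t
      rw [Real.norm_eq_abs, Real.norm_eq_abs]
      have h1 : |2 * f t * f' t| ≤ (f' t)^2 + (f t)^2 := by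
        rw [abs_le]; constructor <;> nlinarith [sq_nonneg (f t + f' t), sq_nonneg (f t - f' t)]
      calc |2 * f t * f' t| ≤ (f' t)^2 + (f t)^2 := h1
        _ ≤ |(f' t)^2 + (f t)^2| := le_abs_self _
    have hg0 : Tendsto (fun t => (f t)^2) atTop (nhds 0) := by
      simpa using (hlim.pow 2)
    have hftc : ∫ t in Set.Ioi (0:ℝ), 2 * f t * f' t = 0 - (f 0)^2 :=
      integral_Ioi_of_hasDerivAt_of_tendsto
        ((hfc 0 Set.self_mem_Ici).pow 2) hg hgint hg0
    have hkey : ∫ t in Set.Ioi (0:ℝ), (-Real.sqrt (a*b)) * (2 * f t * f' t)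
        = Real.sqrt (a*b) * x^2 := by
      rw [integral_const_mul, hftc, hf0]; ring
    have hintsum2 : IntegrableOn (fun t => a * (f' t)^2 + b * (f t)^2) (Set.Ici (0:ℝ)) :=
      (hint'.const_mul a).add (hint.const_mul b)
    have hmono : ∫ t in Set.Ioi (0:ℝ), (-Real.sqrt (a*b)) * (2 * f t * f' t)
        ≤ ∫ t in Set.Ioi (0:ℝ), (a * (f' t)^2 + b * (f t)^2) := by
      refine integral_mono (hgint.const_mul _) (hintsum2.mono_set Set.Ioi_subset_Ici_self) ?_
      intro t
      have h := sq_nonneg (Real.sqrt a * f' t + Real.sqrt b * f t)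
      simp only [hsab]
      nlinarith [h, hsa, hsb]
    have heq : ∫ t in Set.Ici (0:ℝ), (a * (f' t)^2 + b * (f t)^2)
        = ∫ t in Set.Ioi (0:ℝ), (a * (f' t)^2 + b * (f t)^2) :=
      integral_Ici_eq_integral_Ioi
    rw [heq]
    calc Real.sqrt (a*b) * x^2 = _ := hkey.symm
      _ ≤ _ := hmono
  · have hder : ∀ t : ℝ, HasDerivAt (fun s => x * Real.exp (-s / ρ))
        (-(x / ρ) * Real.exp (-t / ρ)) t := by
      intro t
      have h1 : HasDerivAt (fun s : ℝ => -s / ρ) (-1/ρ) t := by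
        simpa using ((hasDerivAt_id t).neg.div_const ρ)
      have := (h1.exp).const_mul x
      refine this.congr_deriv ?_
      field_simp
    have hI : ∫ t in Set.Ioi (0:ℝ), Real.exp (-(2/ρ * t)) = 1/(2/ρ) :=
      exp_int _ (by positivity)
    have hpt : ∀ t : ℝ, Real.exp (-t/ρ)^2 = Real.exp (-(2/ρ*t)) := by
      intro t; rw [sq, ← Real.exp_add]; congr 1; ring
    refine ⟨hder, ?_, ?_⟩
    · rw [integral_Ici_eq_integral_Ioi]
      have h2 : ∀ t : ℝ, a * (-(x / ρ) * Real.exp (-t / ρ)) ^ 2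
          = (a * (x/ρ)^2) * Real.exp (-(2/ρ*t)) := by
        intro t; rw [← hpt t]; ring
      simp_rw [h2]
      rw [integral_const_mul, hI, hsab, hρab]
      field_simp
      nlinarith [hsa, hsb, sq_nonneg x]
    · rw [integral_Ici_eq_integral_Ioi]
      have h2 : ∀ t : ℝ, b * (x * Real.exp (-t / ρ)) ^ 2
          = (b * x^2) * Real.exp (-(2/ρ*t)) := by
        intro t; rw [← hpt t]; ring
      simp_rw [h2]
      rw [integral_const_mul, hI, hsab, hρab]
      field_simp
      linear_combination (-x^2) * hsb
end

section
/- Let σ, η, x, q, κ > 0. Then the infimum over T > 0 of q·η·x²/(2T) + κ·σ·x·√(T/3) equals (3^{2/3}/2) · σ^{2/3} · η^{1/3} · x^{4/3} · q^{1/3} · κ^{2/3}, and it is attained at T* = ( √3·η·x·q / (σ·κ) )^{2/3}. Consequently this optimal VWAP value exceeds the optimal exponential-schedule value (3/2^{5/3})·σ^{2/3}·η^{1/3}·x^{4/3}·q^{1/3}·κ^{2/3} by the constant factor (4/3)^{1/3}, independent of q. -/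
private lemma log_eq_imp {a b : ℝ} (ha : 0 < a) (hb : 0 < b)
    (h : Real.log a = Real.log b) : a = b :=
  Real.log_injOn_pos (Set.mem_Ioi.mpr ha) (Set.mem_Ioi.mpr hb) h

set_option maxHeartbeats 1000000 in
/-- The optimized VWAP schedule: the infimum over horizons `T > 0` of the CVaR cost
`qηx²/(2T) + κσx√(T/3)` equals `(3^{2/3}/2) σ^{2/3} η^{1/3} x^{4/3} q^{1/3} κ^{2/3}`,
attained at `T* = (√3 ηxq/(σκ))^{2/3}`; this exceeds the optimal exponential-schedule
value `(3/2^{5/3}) σ^{2/3} η^{1/3} x^{4/3} q^{1/3} κ^{2/3}` by the factor `(4/3)^{1/3}`. -/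
theorem optimal_vwap_schedule (σ η x q κ : ℝ)
    (hσ : 0 < σ) (hη : 0 < η) (hx : 0 < x) (hq : 0 < q) (hκ : 0 < κ) :
    IsLeast {y : ℝ | ∃ T : ℝ, 0 < T ∧ y = q * η * x ^ 2 / (2 * T) + κ * σ * x * Real.sqrt (T / 3)}
      (((3 : ℝ) ^ ((2 : ℝ) / 3) / 2) * σ ^ ((2 : ℝ) / 3) * η ^ ((1 : ℝ) / 3)
        * x ^ ((4 : ℝ) / 3) * q ^ ((1 : ℝ) / 3) * κ ^ ((2 : ℝ) / 3)) ∧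
    (q * η * x ^ 2 / (2 * ((Real.sqrt 3 * η * x * q / (σ * κ)) ^ ((2 : ℝ) / 3)))
        + κ * σ * x * Real.sqrt (((Real.sqrt 3 * η * x * q / (σ * κ)) ^ ((2 : ℝ) / 3)) / 3)
      = ((3 : ℝ) ^ ((2 : ℝ) / 3) / 2) * σ ^ ((2 : ℝ) / 3) * η ^ ((1 : ℝ) / 3)
        * x ^ ((4 : ℝ) / 3) * q ^ ((1 : ℝ) / 3) * κ ^ ((2 : ℝ) / 3)) ∧
    (((3 : ℝ) ^ ((2 : ℝ) / 3) / 2) * σ ^ ((2 : ℝ) / 3) * η ^ ((1 : ℝ) / 3)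
        * x ^ ((4 : ℝ) / 3) * q ^ ((1 : ℝ) / 3) * κ ^ ((2 : ℝ) / 3)
      = ((4 / 3 : ℝ) ^ ((1 : ℝ) / 3))
        * ((3 / (2 : ℝ) ^ ((5 : ℝ) / 3)) * σ ^ ((2 : ℝ) / 3) * η ^ ((1 : ℝ) / 3)
          * x ^ ((4 : ℝ) / 3) * q ^ ((1 : ℝ) / 3) * κ ^ ((2 : ℝ) / 3))) := by
  have h3 : (0:ℝ) < 3 := by norm_num
  have hs3 : (0:ℝ) < Real.sqrt 3 := Real.sqrt_pos.mpr h3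
  set r : ℝ := Real.sqrt 3 * η * x * q / (σ * κ) with hr
  have hrpos : 0 < r := by positivity
  set u : ℝ := r ^ ((1:ℝ)/3) with hu
  have hupos : 0 < u := Real.rpow_pos_of_pos hrpos _
  set B : ℝ := κ * σ * x / Real.sqrt 3 with hB
  have hBpos : 0 < B := by positivity
  set m : ℝ := ((3 : ℝ) ^ ((2 : ℝ) / 3) / 2) * σ ^ ((2 : ℝ) / 3) * η ^ ((1 : ℝ) / 3)
      * x ^ ((4 : ℝ) / 3) * q ^ ((1 : ℝ) / 3) * κ ^ ((2 : ℝ) / 3) with hm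
  have hmpos : 0 < m := by positivity
  -- logs
  have hlogr : Real.log r = (1/2)*Real.log 3 + Real.log η + Real.log x + Real.log q
      - Real.log σ - Real.log κ := by
    rw [hr, Real.log_div (by positivity) (by positivity),
      Real.log_mul (by positivity) hq.ne', Real.log_mul (by positivity) hx.ne',
      Real.log_mul hs3.ne' hη.ne', Real.log_mul hσ.ne' hκ.ne',
      Real.log_sqrt (by norm_num)]
    ring
  have hlogu : Real.log u = (1/3) * Real.log r := by
    rw [hu, Real.log_rpow hrpos]
  have hlogB : Real.log B = Real.log κ + Real.log σ + Real.log x - (1/2)*Real.log 3 := by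
    rw [hB, Real.log_div (by positivity) hs3.ne',
      Real.log_mul (by positivity) hx.ne', Real.log_mul hκ.ne' hσ.ne',
      Real.log_sqrt (by norm_num)]
    ring
  have hlogm : Real.log m = (2/3)*Real.log 3 - Real.log 2 + (2/3)*Real.log σ
      + (1/3)*Real.log η + (4/3)*Real.log x + (1/3)*Real.log q + (2/3)*Real.log κ := by
    rw [hm, Real.log_mul (by positivity) (by positivity),
      Real.log_mul (by positivity) (by positivity),
      Real.log_mul (by positivity) (by positivity),
      Real.log_mul (by positivity) (by positivity),
      Real.log_mul (by positivity) (by positivity),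
      Real.log_div (by positivity) (by norm_num),
      Real.log_rpow h3, Real.log_rpow hσ, Real.log_rpow hη, Real.log_rpow hx,
      Real.log_rpow hq, Real.log_rpow hκ]
  -- main value identity
  have hmain : (3/2) * B * u = m := by
    apply log_eq_imp (by positivity) hmpos
    rw [Real.log_mul (by positivity) hupos.ne', Real.log_mul (by norm_num) hBpos.ne',
      Real.log_div (by norm_num) (by norm_num), hlogu, hlogr, hlogB, hlogm]
    ring
  have hu2 : u ^ 2 = r ^ ((2:ℝ)/3) := by
    rw [hu, ← Real.rpow_natCast (r ^ ((1:ℝ)/3)) 2, ← Real.rpow_mul hrpos.le]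
    norm_num
  have hA : q * η * x ^ 2 = B * u ^ 3 := by
    have hu3 : u ^ 3 = r := by
      rw [hu, ← Real.rpow_natCast (r ^ ((1:ℝ)/3)) 3, ← Real.rpow_mul hrpos.le]
      norm_num
    rw [hu3, hB, hr]
    field_simp
  have hKSX : κ * σ * x = B * Real.sqrt 3 := by
    rw [hB]; field_simp
  -- second conjunct: value at T*
  have heq : q * η * x ^ 2 / (2 * (r ^ ((2:ℝ)/3)))
      + κ * σ * x * Real.sqrt ((r ^ ((2:ℝ)/3)) / 3) = m := by
    rw [← hu2, hA, hKSX, Real.sqrt_div (by positivity) 3,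
      Real.sqrt_sq hupos.le, ← hmain]
    field_simp
    ring
  refine ⟨⟨⟨r ^ ((2:ℝ)/3), Real.rpow_pos_of_pos hrpos _, heq.symm⟩, ?_⟩, heq, ?_⟩
  · rintro y ⟨T, hT, rfl⟩
    set v : ℝ := Real.sqrt T with hv
    have hvpos : 0 < v := Real.sqrt_pos.mpr hT
    have hTv : T = v ^ 2 := (Real.sq_sqrt hT.le).symm
    have hcost : q * η * x ^ 2 / (2 * T) + κ * σ * x * Real.sqrt (T / 3)
        = B * u ^ 3 / (2 * v ^ 2) + B * v := by
      rw [hA, hKSX, Real.sqrt_div hT.le 3, ← hv, hTv]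
      field_simp
    rw [hcost, ← hmain]
    have hfac : B * u ^ 3 / (2 * v ^ 2) + B * v - (3/2) * B * u
        = B * (v - u) ^ 2 * (2 * v + u) / (2 * v ^ 2) := by
      field_simp
      ring
    have hpos : (0:ℝ) ≤ B * (v - u) ^ 2 * (2 * v + u) / (2 * v ^ 2) := by positivity
    linarith [hfac, hpos]
  · have hc : (3:ℝ) ^ ((2:ℝ)/3) / 2
        = ((4/3:ℝ) ^ ((1:ℝ)/3)) * (3 / (2:ℝ) ^ ((5:ℝ)/3)) := by
      apply log_eq_imp (by positivity) (by positivity)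
      rw [Real.log_div (by positivity) (by norm_num),
        Real.log_mul (by positivity) (by positivity),
        Real.log_div (by norm_num) (by positivity),
        Real.log_rpow h3, Real.log_rpow (by norm_num : (0:ℝ) < 4/3),
        Real.log_rpow (by norm_num : (0:ℝ) < 2),
        Real.log_div (by norm_num : (4:ℝ) ≠ 0) (by norm_num : (3:ℝ) ≠ 0),
        (by norm_num : (4:ℝ) = 2^2), Real.log_pow]
      push_cast
      ring
    rw [hm]
    rw [hc]
    ring
end
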